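/- arXiv:1811.10106 — 2 statements merged into one kernel-verified Lean document; each statement's English description precedes it below -/
import Mathlib

section
/- Let Z be a random variable with the chi-squared distribution with k degrees of freedom, k ≥ 1. Then for every t ≥ 1, P((Z − k)/k ≥ 4t) ≤ exp(−k·t). -/
open MeasureTheory ProbabilityTheory Real
open scoped NNReal ENNReal

noncomputable section

/-- standard Gaussian measure on ℝ^k -/
def stdGaussianVec (k : ℕ) : Measure (Fin k → ℝ) :=
  Measure.pi fun _ => gaussianReal 0 1

/-- chi-squared distribution with k degrees of freedom: the law of the squared Euclidean norm
of a standard Gaussian vector in ℝ^k -/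
def chiSq (k : ℕ) : Measure ℝ :=
  (stdGaussianVec k).map (fun x => ∑ i, (x i) ^ 2)


lemma gaussRW : gaussianReal 0 1
    = (volume : Measure ℝ).withDensity (fun x => ((gaussianPDFReal 0 1 x).toNNReal : ENNReal)) := by
  rw [gaussianReal_of_var_ne_zero 0 one_ne_zero]
  rfl

lemma pdf_mul (x : ℝ) :
    gaussianPDFReal 0 1 x * Real.exp ((3/8) * x ^ 2)
      = (Real.sqrt (2 * π))⁻¹ * Real.exp (-(1/8) * x ^ 2) := by
  simp only [gaussianPDFReal]
  push_cast
  rw [mul_assoc, ← Real.exp_add]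
  congr 2
  · norm_num
  · ring

lemma gauss_integrable : Integrable (fun x : ℝ => Real.exp ((3/8) * x ^ 2)) (gaussianReal 0 1) := by
  rw [gaussRW, integrable_withDensity_iff_integrable_smul
    (measurable_gaussianPDFReal 0 1).real_toNNReal]
  have : (fun x : ℝ => ((gaussianPDFReal 0 1 x).toNNReal : ℝ≥0) • Real.exp ((3/8) * x ^ 2))
      = fun x : ℝ => (Real.sqrt (2 * π))⁻¹ * Real.exp (-(1/8) * x ^ 2) := by
    funext x
    rw [NNReal.smul_def, smul_eq_mul, Real.coe_toNNReal _ (gaussianPDFReal_nonneg 0 1 x), pdf_mul]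
  rw [this]
  exact (integrable_exp_neg_mul_sq (by norm_num : (0:ℝ) < 1/8)).const_mul _

lemma gauss_integral : ∫ x, Real.exp ((3/8) * x ^ 2) ∂(gaussianReal 0 1) = 2 := by
  rw [gaussRW, integral_withDensity_eq_integral_smul
    (measurable_gaussianPDFReal 0 1).real_toNNReal]
  have : (fun x : ℝ => ((gaussianPDFReal 0 1 x).toNNReal : ℝ≥0) • Real.exp ((3/8) * x ^ 2))
      = fun x : ℝ => (Real.sqrt (2 * π))⁻¹ * Real.exp (-(1/8) * x ^ 2) := by
    funext x
    rw [NNReal.smul_def, smul_eq_mul, Real.coe_toNNReal _ (gaussianPDFReal_nonneg 0 1 x), pdf_mul]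
  rw [this, integral_const_mul, integral_gaussian]
  have h8 : π / (1/8) = 4 * (2 * π) := by ring
  rw [h8, Real.sqrt_mul (by norm_num : (0:ℝ) ≤ 4)]
  have hpos : (0:ℝ) < Real.sqrt (2 * π) := Real.sqrt_pos.mpr (by positivity)
  rw [show Real.sqrt 4 = 2 by rw [show (4:ℝ) = 2^2 by norm_num, Real.sqrt_sq (by norm_num)]]
  field_simp


/-- **Corollary.** For Z ~ χ²_k with k ≥ 1 and every t ≥ 1: P((Z − k)/k ≥ 4t) ≤ exp(−kt). -/
theorem chiSq_upper_tail (k : ℕ) (hk : 1 ≤ k) (t : ℝ) (ht : 1 ≤ t) :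
    chiSq k {z : ℝ | (z - k) / k ≥ 4 * t} ≤ ENNReal.ofReal (Real.exp (-(k * t))) := by
  have hk0 : (0:ℝ) < k := by exact_mod_cast hk
  letI : MeasureSpace ℝ := ⟨gaussianReal 0 1⟩
  haveI : SigmaFinite (volume : Measure ℝ) := by
    show SigmaFinite (gaussianReal 0 1); infer_instance
  set μ : Measure (Fin k → ℝ) := stdGaussianVec k with hμ
  haveI : IsProbabilityMeasure μ := by
    rw [hμ, stdGaussianVec]; infer_instance
  have hvol : μ = (volume : Measure (Fin k → ℝ)) := rfl
  have hX : Measurable (fun x : Fin k → ℝ => ∑ i, (x i) ^ 2) := by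
    exact Finset.measurable_sum _ fun i _ => ((measurable_pi_apply i).pow_const 2)
  have hS : MeasurableSet {z : ℝ | (z - k) / k ≥ 4 * t} :=
    measurableSet_le measurable_const ((measurable_id.sub_const _).div_const _)
  rw [chiSq, Measure.map_apply hX hS]
  have hset : (fun x : Fin k → ℝ => ∑ i, (x i) ^ 2) ⁻¹' {z : ℝ | (z - k) / k ≥ 4 * t}
      = {x : Fin k → ℝ | (k + 4 * k * t : ℝ) ≤ ∑ i, (x i) ^ 2} := by
    ext x
    simp only [Set.mem_preimage, Set.mem_setOf_eq, ge_iff_le, le_div_iff₀ hk0]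
    constructor <;> intro h <;> nlinarith
  rw [hset]
  have hprod : ∀ x : Fin k → ℝ,
      Real.exp ((3/8) * ∑ i, (x i) ^ 2) = ∏ i, Real.exp ((3/8) * (x i) ^ 2) := by
    intro x; rw [Finset.mul_sum, Real.exp_sum]
  have h_int : Integrable (fun x : Fin k → ℝ => Real.exp ((3/8) * ∑ i, (x i) ^ 2)) μ := by
    rw [hvol]
    have := Integrable.fintype_prod (ι := Fin k)
      (f := fun _ (y : ℝ) => Real.exp ((3/8) * y ^ 2)) (fun _ => gauss_integrable)
    exact this.congr (by filter_upwards with x using (hprod x).symm)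
  have hb := measure_ge_le_exp_mul_mgf (μ := μ) (X := fun x => ∑ i, (x i) ^ 2)
    (t := 3/8) (k + 4 * k * t) (by norm_num) h_int
  have hmgf : mgf (fun x : Fin k → ℝ => ∑ i, (x i) ^ 2) μ (3/8) = 2 ^ k := by
    rw [mgf]
    calc ∫ x, Real.exp ((3/8) * ∑ i, (x i) ^ 2) ∂μ
        = ∫ x : Fin k → ℝ, ∏ i, Real.exp ((3/8) * (x i) ^ 2) := by
          rw [hvol]; exact integral_congr_ae (by filter_upwards with x using hprod x)
      _ = (∫ y : ℝ, Real.exp ((3/8) * y ^ 2)) ^ (Fintype.card (Fin k)) :=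
          integral_fintype_prod_eq_pow (ι := Fin k) (μ := volume) (fun y => Real.exp ((3/8) * y ^ 2))
      _ = 2 ^ k := by rw [Fintype.card_fin]; rw [show (∫ y : ℝ, Real.exp ((3/8) * y ^ 2))
            = ∫ y, Real.exp ((3/8) * y ^ 2) ∂(gaussianReal 0 1) from rfl, gauss_integral]
  rw [hmgf] at hb
  have hnum : Real.exp (-(3/8) * (k + 4 * k * t)) * 2 ^ k ≤ Real.exp (-(k * t)) := by
    have h2 : (2:ℝ) ^ k = Real.exp (k * Real.log 2) := by
      rw [Real.exp_nat_mul, Real.exp_log (by norm_num)]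
    rw [h2, ← Real.exp_add, Real.exp_le_exp]
    have hlog := Real.log_two_lt_d9
    nlinarith [mul_le_mul_of_nonneg_left ht (le_of_lt hk0)]
  rw [← ENNReal.ofReal_toReal (measure_ne_top μ _)]
  exact ENNReal.ofReal_le_ofReal (hb.trans hnum)
end
end

section
/- Let u ∈ ℝ^d (d ≥ 2) be a unit vector, θ ≥ 0, Σ = I_d + θuuᵀ, and let u₋₁ ∈ ℝ^{d−1} denote u with its first coordinate removed. Then (Σ_{2:d})⁻¹·Σ_{2:d,1} = (θ·u₁/(1 + (1−u₁²)·θ))·u₋₁. -/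
open Matrix

noncomputable section

/-- the first index of Fin d (coordinate "1") -/
def fin0 {d : ℕ} (hd : 2 ≤ d) : Fin d := ⟨0, by omega⟩

/-- the (j+1)-st index of Fin d (coordinates "2,…,d") -/
def finTail {d : ℕ} (hd : 2 ≤ d) (j : Fin (d - 1)) : Fin d :=
  ⟨j.1 + 1, by have := j.isLt; omega⟩

/-- the lower-right (d−1)×(d−1) block Σ_{2:d}, obtained by deleting the first row and column -/
def subLR {d : ℕ} (hd : 2 ≤ d) (S : Matrix (Fin d) (Fin d) ℝ) :
    Matrix (Fin (d - 1)) (Fin (d - 1)) ℝ :=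
  Matrix.of fun j j' => S (finTail hd j) (finTail hd j')

/-- the first row of Σ with its first entry removed, Σ_{1,2:d} -/
def subRow1 {d : ℕ} (hd : 2 ≤ d) (S : Matrix (Fin d) (Fin d) ℝ) : Fin (d - 1) → ℝ :=
  fun j => S (fin0 hd) (finTail hd j)

/-- the first column of Σ with its first entry removed, Σ_{2:d,1} -/
def subCol1 {d : ℕ} (hd : 2 ≤ d) (S : Matrix (Fin d) (Fin d) ℝ) : Fin (d - 1) → ℝ :=
  fun j => S (finTail hd j) (fin0 hd)

/-- For a unit vector u ∈ ℝ^d, θ ≥ 0 and Σ = I_d + θuuᵀ: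
(Σ_{2:d})⁻¹·Σ_{2:d,1} = (θu₁/(1 + (1−u₁²)θ))·u₋₁. -/
theorem spiked_beta_star (d : ℕ) (hd : 2 ≤ d) (u : Fin d → ℝ)
    (hu : ∑ i, (u i) ^ 2 = 1) (θ : ℝ) (hθ : 0 ≤ θ) :
    (subLR hd ((1 : Matrix (Fin d) (Fin d) ℝ) + θ • vecMulVec u u))⁻¹.mulVec
        (subCol1 hd ((1 : Matrix (Fin d) (Fin d) ℝ) + θ • vecMulVec u u))
      = fun j => (θ * u (fin0 hd) / (1 + (1 - (u (fin0 hd)) ^ 2) * θ)) * u (finTail hd j) := by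
  set u0 := u (fin0 hd) with hu0
  set v : Fin (d-1) → ℝ := fun j => u (finTail hd j) with hv
  have hd' : d - 1 + 1 = d := by omega
  have hs : ∑ j, v j ^ 2 = 1 - u0 ^ 2 := by
    have h1 : ∑ i : Fin d, u i ^ 2 = ∑ i : Fin (d-1+1), u (Fin.cast hd' i) ^ 2 :=
      (Fin.sum_congr' (fun i => u i ^ 2) hd').symm
    rw [h1, Fin.sum_univ_succ] at hu
    have h2 : Fin.cast hd' 0 = fin0 hd := by ext; simp [fin0]
    have h3 : ∀ j : Fin (d-1), Fin.cast hd' j.succ = finTail hd j := by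
      intro j; ext; simp [finTail]
    rw [h2] at hu
    simp_rw [h3] at hu
    rw [← hu0] at hu
    linarith [hu]
  have hsnn : 0 ≤ 1 - u0 ^ 2 := by
    rw [← hs]; positivity
  have hpos : 0 < 1 + (1 - u0 ^ 2) * θ := by nlinarith
  have h1ne : (1 + (1 - u0 ^ 2) * θ) ≠ 0 := ne_of_gt hpos
  set a : ℝ := θ / (1 + (1 - u0 ^ 2) * θ) with ha
  set M : Matrix (Fin (d-1)) (Fin (d-1)) ℝ := vecMulVec v v with hMdef
  have hM : M * M = (1 - u0 ^ 2) • M := by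
    ext i j
    simp only [hMdef, Matrix.mul_apply, vecMulVec_apply, Matrix.smul_apply, smul_eq_mul]
    have : ∀ k, v i * v k * (v k * v j) = (v i * v j) * v k ^ 2 := fun k => by ring
    simp_rw [this]
    rw [← Finset.mul_sum, hs]
    ring
  have hinjT : ∀ j j' : Fin (d-1), finTail hd j = finTail hd j' ↔ j = j' := by
    intro j j'
    constructor
    · intro h; ext; have := congrArg Fin.val h; simpa [finTail] using this
    · intro h; rw [h]
  have hA : subLR hd ((1 : Matrix (Fin d) (Fin d) ℝ) + θ • vecMulVec u u) = 1 + θ • M := by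
    ext j j'
    simp only [subLR, Matrix.of_apply, Matrix.add_apply, Matrix.smul_apply, vecMulVec_apply,
      Matrix.one_apply, smul_eq_mul, hMdef, hinjT, hv]
  set B : Matrix (Fin (d-1)) (Fin (d-1)) ℝ := 1 - a • M with hB
  have key : θ - a - θ * a * (1 - u0 ^ 2) = 0 := by
    rw [ha]; field_simp; ring
  have hcol : subCol1 hd ((1 : Matrix (Fin d) (Fin d) ℝ) + θ • vecMulVec u u)
      = fun j => θ * (v j * u0) := by
    funext j
    have hne : finTail hd j ≠ fin0 hd := by
      intro h; have := congrArg Fin.val h; simp [finTail, fin0] at this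
    simp [subCol1, Matrix.add_apply, Matrix.smul_apply, vecMulVec_apply, Matrix.one_apply, hne,
      hv, hu0]
  have e1 : ∀ b : ℝ, (θ • M) * (b • M) = (θ * b * (1 - u0 ^ 2)) • M := by
    intro b
    simp only [Matrix.smul_mul, Matrix.mul_smul, hM]; module
  have e2 : ∀ b : ℝ, (b • M) * (θ • M) = (θ * b * (1 - u0 ^ 2)) • M := by
    intro b
    simp only [Matrix.smul_mul, Matrix.mul_smul, hM]; module
  have hAB : (1 + θ • M) * B = 1 := by
    have h2 : (1 + θ • M) * B = 1 + (θ - a - θ * a * (1 - u0 ^ 2)) • M := by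
      rw [hB, Matrix.mul_sub, Matrix.mul_one, Matrix.add_mul, Matrix.one_mul, e1 a]
      module
    rw [h2, key]; simp
  have hinv : (1 + θ • M)⁻¹ = B := Matrix.inv_eq_right_inv hAB
  rw [hA, hcol, hinv, hB]
  funext j
  simp only [Matrix.mulVec, dotProduct, Matrix.sub_apply, Matrix.one_apply, Matrix.smul_apply,
    vecMulVec_apply, smul_eq_mul, sub_mul, ite_mul, one_mul, zero_mul, Finset.sum_sub_distrib,
    Finset.sum_ite_eq, Finset.mem_univ, if_true, hMdef]
  have : ∑ k, a * (v j * v k) * (θ * (v k * u0)) = a * θ * u0 * v j * ∑ k, v k ^ 2 := by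
    rw [Finset.mul_sum]; congr 1; funext k; ring
  rw [this, hs, ha]
  have h3 : (1 : ℝ) + (θ - θ * u0 ^ 2) ≠ 0 := fun h => h1ne (by linarith)
  field_simp
  linear_combination
end
end
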